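/- arXiv:0708.4371 — 2 statements merged into one kernel-verified Lean document; each statement's English description precedes it below -/
import Mathlib

section
/- Let σ : [a,b] → ℂ be a C¹ parametrization of a Jordan curve with σ'(a) = σ'(b) and |σ'(t)| > 0 for all t ∈ [a,b]. Let φ : [a,b] → ℝ be a continuous function such that σ'(t) = |σ'(t)|·exp(i·φ(t)) for all t ∈ [a,b]. Then φ(b) − φ(a) equals either 2π or −2π. -/
open Set Complex Topology Filter

namespace Umlauf


noncomputable def nz (z : ℂ) : ℂ := z / (‖z‖ : ℂ)

lemma abs_nz {z : ℂ} (hz : z ≠ 0) : ‖nz z‖ = 1 := by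
  have : ‖z‖ ≠ 0 := norm_ne_zero_iff.mpr hz
  simp [nz, norm_div, this]

lemma nz_im (z : ℂ) : (nz z).im = z.im / ‖z‖ := by
  rcases eq_or_ne (‖z‖) 0 with h | h
  · simp [nz, h]
  · have h2 : (‖z‖ : ℂ) ≠ 0 := by exact_mod_cast h
    rw [nz, Complex.div_im]
    simp only [Complex.ofReal_im, Complex.ofReal_re, mul_zero, zero_div, sub_zero,
      Complex.normSq_ofReal, mul_zero]
    rw [mul_comm z.im, mul_div_mul_left _ _ h]

lemma nz_pos_mul {r : ℝ} (hr : 0 < r) (z : ℂ) : nz ((r : ℂ) * z) = nz z := by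
  rcases eq_or_ne z 0 with rfl | hz
  · simp [nz]
  · have h1 : ‖(r:ℂ) * z‖ = r * ‖z‖ := by
      rw [norm_mul, Complex.norm_real, Real.norm_eq_abs, _root_.abs_of_pos hr]
    have h2 : (‖z‖ : ℂ) ≠ 0 := by
      exact_mod_cast norm_ne_zero_iff.mpr hz
    have h3 : (r : ℂ) ≠ 0 := by exact_mod_cast hr.ne'
    rw [nz, nz, h1]
    push_cast
    field_simp

lemma nz_neg (z : ℂ) : nz (-z) = - nz z := by simp [nz, neg_div]

lemma nz_real_pos {x : ℝ} (hx : 0 < x) : nz (x : ℂ) = 1 := by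
  rw [nz, Complex.norm_real, Real.norm_eq_abs, _root_.abs_of_pos hx, div_self]
  exact_mod_cast hx.ne'

lemma nz_real_neg {x : ℝ} (hx : x < 0) : nz (x : ℂ) = -1 := by
  rw [nz, Complex.norm_real, Real.norm_eq_abs, _root_.abs_of_neg hx]
  push_cast
  rw [div_neg, div_self (by exact_mod_cast hx.ne : (x:ℂ) ≠ 0)]

lemma continuousAt_nz {z : ℂ} (hz : z ≠ 0) : ContinuousAt nz z := by
  have h1 : ContinuousAt (fun w : ℂ => (‖w‖ : ℂ)) z :=
    (Complex.continuous_ofReal.comp continuous_norm).continuousAt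
  have h2 : ((‖z‖ : ℝ) : ℂ) ≠ 0 := by
    exact_mod_cast norm_ne_zero_iff.mpr hz
  exact continuousAt_id.div h1 h2

lemma expI_re (r : ℝ) : (Complex.exp (Complex.I * r)).re = Real.cos r := by
  rw [mul_comm, Complex.exp_mul_I]
  simp [Complex.cos_ofReal_re]

lemma expI_im (r : ℝ) : (Complex.exp (Complex.I * r)).im = Real.sin r := by
  rw [mul_comm, Complex.exp_mul_I]
  simp [Complex.sin_ofReal_re]

/-- two continuous lifts differ by a constant -/
lemma lift_sub_const {α β : ℝ} {ψ χ : ℝ → ℝ} (hαβ : α ≤ β)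
    (hψ : ContinuousOn ψ (Icc α β)) (hχ : ContinuousOn χ (Icc α β))
    (h : ∀ t ∈ Icc α β, Complex.exp (Complex.I * ψ t) = Complex.exp (Complex.I * χ t)) :
    ∀ t ∈ Icc α β, ψ t - χ t = ψ β - χ β := by
  have hmul : ∀ t ∈ Icc α β, ∃ k : ℤ, ψ t - χ t = 2 * Real.pi * k := by
    intro t ht
    obtain ⟨n, hn⟩ := Complex.exp_eq_exp_iff_exists_int.mp (h t ht)
    refine ⟨n, ?_⟩
    have : (Complex.I : ℂ) * (ψ t) = Complex.I * ((χ t : ℂ) + n * (2 * Real.pi)) := by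
      rw [hn]; ring
    have h2 : ((ψ t : ℂ)) = ((χ t : ℂ) + n * (2 * Real.pi)) :=
      mul_left_cancel₀ Complex.I_ne_zero this
    have h3 : ((ψ t : ℝ)) = χ t + n * (2 * Real.pi) := by
      exact_mod_cast h2
    rw [h3]; ring
  set D := fun t => ψ t - χ t with hD
  have hDdef : ∀ t, D t = ψ t - χ t := fun _ => rfl
  have hDcont : ContinuousOn D (Icc α β) := hψ.sub hχ
  have hconn : IsPreconnected (D '' Icc α β) :=
    (isPreconnected_Icc).image D hDcont
  intro t ht
  by_contra hne
  have hβ : β ∈ Icc α β := ⟨hαβ, le_rfl⟩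
  obtain ⟨m, hm⟩ := hmul t ht
  obtain ⟨n, hn⟩ := hmul β hβ
  have hmn : m ≠ n := by
    intro h'; apply hne; rw [hm, hn, h']
  have hpi := Real.pi_pos
  -- wlog D t < D β
  rcases lt_trichotomy (D t) (D β) with hlt | heq | hgt
  · have hz : 2 * Real.pi * m + Real.pi ∈ Icc (D t) (D β) := by
      rw [hDdef t, hDdef β]
      constructor
      · rw [hm]; linarith
      · rw [hn]
        have : m < n := by
          by_contra hc
          push_neg at hc
          have : (n : ℝ) ≤ m := by exact_mod_cast hc
          rw [hDdef t, hDdef β, hm, hn] at hlt; nlinarith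
        have : (m : ℝ) + 1 ≤ n := by exact_mod_cast this
        nlinarith
    have := hconn.Icc_subset (mem_image_of_mem D ht) (mem_image_of_mem D hβ) hz
    obtain ⟨t', ht', heq'⟩ := this
    obtain ⟨k, hk⟩ := hmul t' ht'
    rw [hDdef, hk] at heq'
    have : (2 : ℝ) * (k : ℝ) = 2 * m + 1 := by nlinarith
    have : (2 * k : ℤ) = 2 * m + 1 := by exact_mod_cast this
    omega
  · exact hne ((hDdef t).symm.trans (heq.trans (hDdef β)))
  · have hz : 2 * Real.pi * n + Real.pi ∈ Icc (D β) (D t) := by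
      rw [hDdef t, hDdef β]
      constructor
      · rw [hn]; linarith
      · rw [hm]
        have : n < m := by
          by_contra hc
          push_neg at hc
          have : (m : ℝ) ≤ n := by exact_mod_cast hc
          rw [hDdef t, hDdef β, hm, hn] at hgt; nlinarith
        have : (n : ℝ) + 1 ≤ m := by exact_mod_cast this
        nlinarith
    have := hconn.Icc_subset (mem_image_of_mem D hβ) (mem_image_of_mem D ht) hz
    obtain ⟨t', ht', heq'⟩ := this
    obtain ⟨k, hk⟩ := hmul t' ht'
    rw [hDdef, hk] at heq'
    have : (2 : ℝ) * (k : ℝ) = 2 * n + 1 := by nlinarith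
    have : (2 * k : ℤ) = 2 * n + 1 := by exact_mod_cast this
    omega

lemma sin_lt_zero_of_neg {x : ℝ} (h1 : -Real.pi < x) (h2 : x < 0) : Real.sin x < 0 := by
  have := Real.sin_pos_of_pos_of_lt_pi (x := -x) (by linarith) (by linarith)
  rw [Real.sin_neg] at this; linarith

lemma sin_shift (x : ℝ) (n : ℤ) : Real.sin (x + n * (2 * Real.pi)) = Real.sin x := by
  simpa [mul_comm, mul_assoc, mul_left_comm] using Real.sin_add_int_mul_two_pi x n

/-- going from direction `+1` to `-1` through the upper half plane advances the lift by `π` -/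
lemma edge_pos {α β : ℝ} {ψ : ℝ → ℝ} (hαβ : α ≤ β) (hc : ContinuousOn ψ (Icc α β))
    (hsin : ∀ t ∈ Icc α β, 0 ≤ Real.sin (ψ t))
    (h1 : Real.cos (ψ α) = 1) (h2 : Real.cos (ψ β) = -1) :
    ψ β - ψ α = Real.pi := by
  have hpi := Real.pi_pos
  obtain ⟨n, hn⟩ := (Real.cos_eq_one_iff (ψ α)).mp h1
  have key : ∀ t ∈ Icc α β, ψ α ≤ ψ t ∧ ψ t ≤ ψ α + Real.pi := by
    intro t ht
    constructor
    · by_contra hlt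
      push_neg at hlt
      set v := (max (ψ t) (ψ α - Real.pi) + ψ α) / 2 with hv
      have hv1 : ψ t < v := by
        have : ψ t ≤ max (ψ t) (ψ α - Real.pi) := le_max_left _ _
        have h' : ψ t < ψ α := hlt
        rw [hv]; rcases le_total (ψ t) (ψ α - Real.pi) with h'' | h''
        · rw [max_eq_right h'']; linarith
        · rw [max_eq_left h'']; linarith
      have hv2 : v < ψ α := by
        rw [hv]; rcases le_total (ψ t) (ψ α - Real.pi) with h'' | h''
        · rw [max_eq_right h'']; linarith
        · rw [max_eq_left h'']; linarith
      have hv3 : ψ α - Real.pi < v := by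
        have : ψ α - Real.pi ≤ max (ψ t) (ψ α - Real.pi) := le_max_right _ _
        rw [hv]; linarith
      have hsv : Real.sin v < 0 := by
        have : Real.sin v = Real.sin (v - ψ α) := by
          nth_rewrite 1 [show v = (v - ψ α) + ψ α by ring]
          rw [← hn, sin_shift]
        rw [this]
        exact sin_lt_zero_of_neg (by linarith) (by linarith)
      obtain ⟨t', ht', heq⟩ := intermediate_value_Icc' ht.1 (hc.mono (Icc_subset_Icc le_rfl ht.2))
        (⟨le_of_lt hv1, le_of_lt hv2⟩ : v ∈ Icc (ψ t) (ψ α))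
      have := hsin t' ⟨ht'.1, le_trans ht'.2 ht.2⟩
      rw [heq] at this; linarith
    · by_contra hgt
      push_neg at hgt
      set v := (ψ α + Real.pi + min (ψ t) (ψ α + 2 * Real.pi)) / 2 with hv
      have hv1 : ψ α + Real.pi < v := by
        have h1' : ψ α + Real.pi < ψ t := hgt
        rw [hv]; rcases le_total (ψ t) (ψ α + 2 * Real.pi) with h'' | h''
        · rw [min_eq_left h'']; linarith
        · rw [min_eq_right h'']; linarith
      have hv2 : v < ψ t := by
        rw [hv]; rcases le_total (ψ t) (ψ α + 2 * Real.pi) with h'' | h''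
        · rw [min_eq_left h'']; linarith
        · rw [min_eq_right h'']; linarith
      have hv3 : v < ψ α + 2 * Real.pi := by
        have : min (ψ t) (ψ α + 2 * Real.pi) ≤ ψ α + 2 * Real.pi := min_le_right _ _
        rw [hv]; linarith
      have hsv : Real.sin v < 0 := by
        have : Real.sin v = Real.sin (v - ψ α - 2 * Real.pi) := by
          nth_rewrite 1 [show v = (v - ψ α - 2 * Real.pi) + (n + 1) * (2 * Real.pi) by rw [← hn] at *; push_cast; ring]
          rw [show ((n : ℝ) + 1) * (2 * Real.pi) = ((n + 1 : ℤ) : ℝ) * (2 * Real.pi) by push_cast; ring, sin_shift]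
        rw [this]
        exact sin_lt_zero_of_neg (by linarith) (by linarith)
      obtain ⟨t', ht', heq⟩ := intermediate_value_Icc ht.1 (hc.mono (Icc_subset_Icc le_rfl ht.2))
        (⟨by linarith, le_of_lt hv2⟩ : v ∈ Icc (ψ α) (ψ t))
      have := hsin t' ⟨ht'.1, le_trans ht'.2 ht.2⟩
      rw [heq] at this; linarith
  have hβmem : β ∈ Icc α β := ⟨hαβ, le_rfl⟩
  obtain ⟨hlow, hhigh⟩ := key β hβmem
  have h2' : Real.cos (ψ β - Real.pi) = 1 := by
    rw [Real.cos_sub_pi, h2]; ring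
  obtain ⟨m, hm⟩ := (Real.cos_eq_one_iff _).mp h2'
  have hmn : m = n := by
    have he1 : (n : ℝ) * (2 * Real.pi) ≤ m * (2 * Real.pi) + Real.pi := by rw [hn, hm]; linarith
    have he2 : (m : ℝ) * (2 * Real.pi) + Real.pi ≤ n * (2 * Real.pi) + Real.pi := by rw [hn, hm]; linarith
    have g1 : (m : ℝ) ≤ n := by nlinarith
    have g2 : (n : ℝ) < m + 1 := by nlinarith
    have g1' : m ≤ n := by exact_mod_cast g1
    have g2' : n < m + 1 := by exact_mod_cast g2
    omega
  have : ψ β - Real.pi = ψ α := by rw [← hm, hmn, hn]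
  linarith

/-- going from direction `-1` to `+1` through the upper half plane retreats the lift by `π` -/
lemma edge_neg {α β : ℝ} {ψ : ℝ → ℝ} (hαβ : α ≤ β) (hc : ContinuousOn ψ (Icc α β))
    (hsin : ∀ t ∈ Icc α β, 0 ≤ Real.sin (ψ t))
    (h1 : Real.cos (ψ α) = -1) (h2 : Real.cos (ψ β) = 1) :
    ψ β - ψ α = -Real.pi := by
  have hpi := Real.pi_pos
  have h1' : Real.cos (ψ α - Real.pi) = 1 := by rw [Real.cos_sub_pi, h1]; ring
  obtain ⟨n, hn⟩ := (Real.cos_eq_one_iff _).mp h1'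
  -- so ψ α = 2πn + π
  have hψα : ψ α = n * (2 * Real.pi) + Real.pi := by linarith [hn]
  have key : ∀ t ∈ Icc α β, ψ α - Real.pi ≤ ψ t ∧ ψ t ≤ ψ α := by
    intro t ht
    constructor
    · by_contra hlt
      push_neg at hlt
      set v := (max (ψ t) (ψ α - 2 * Real.pi) + (ψ α - Real.pi)) / 2 with hv
      have hv1 : ψ t < v := by
        rw [hv]; rcases le_total (ψ t) (ψ α - 2 * Real.pi) with h'' | h''
        · rw [max_eq_right h'']; linarith
        · rw [max_eq_left h'']; linarith
      have hv2 : v < ψ α - Real.pi := by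
        rw [hv]; rcases le_total (ψ t) (ψ α - 2 * Real.pi) with h'' | h''
        · rw [max_eq_right h'']; linarith
        · rw [max_eq_left h'']; linarith
      have hv3 : ψ α - 2 * Real.pi < v := by
        have : ψ α - 2 * Real.pi ≤ max (ψ t) (ψ α - 2 * Real.pi) := le_max_right _ _
        rw [hv]; linarith
      have hsv : Real.sin v < 0 := by
        have : Real.sin v = Real.sin (v - ψ α + Real.pi) := by
          nth_rewrite 1 [show v = (v - ψ α + Real.pi) + n * (2 * Real.pi) by rw [hψα]; ring]
          rw [sin_shift]
        rw [this]
        exact sin_lt_zero_of_neg (by linarith) (by linarith)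
      obtain ⟨t', ht', heq⟩ := intermediate_value_Icc' ht.1 (hc.mono (Icc_subset_Icc le_rfl ht.2))
        (⟨le_of_lt hv1, by linarith⟩ : v ∈ Icc (ψ t) (ψ α))
      have := hsin t' ⟨ht'.1, le_trans ht'.2 ht.2⟩
      rw [heq] at this; linarith
    · by_contra hgt
      push_neg at hgt
      set v := (ψ α + min (ψ t) (ψ α + Real.pi)) / 2 with hv
      have hv1 : ψ α < v := by
        rw [hv]; rcases le_total (ψ t) (ψ α + Real.pi) with h'' | h''
        · rw [min_eq_left h'']; linarith
        · rw [min_eq_right h'']; linarith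
      have hv2 : v < ψ t := by
        rw [hv]; rcases le_total (ψ t) (ψ α + Real.pi) with h'' | h''
        · rw [min_eq_left h'']; linarith
        · rw [min_eq_right h'']; linarith
      have hv3 : v < ψ α + Real.pi := by
        have : min (ψ t) (ψ α + Real.pi) ≤ ψ α + Real.pi := min_le_right _ _
        rw [hv]; linarith
      have hsv : Real.sin v < 0 := by
        have : Real.sin v = Real.sin (v - ψ α - Real.pi) := by
          nth_rewrite 1 [show v = (v - ψ α - Real.pi) + (n + 1) * (2 * Real.pi) by rw [hψα]; push_cast; ring]
          rw [show ((n : ℝ) + 1) * (2 * Real.pi) = ((n + 1 : ℤ) : ℝ) * (2 * Real.pi) by push_cast; ring, sin_shift]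
        rw [this]
        exact sin_lt_zero_of_neg (by linarith) (by linarith)
      obtain ⟨t', ht', heq⟩ := intermediate_value_Icc ht.1 (hc.mono (Icc_subset_Icc le_rfl ht.2))
        (⟨le_of_lt hv1, le_of_lt hv2⟩ : v ∈ Icc (ψ α) (ψ t))
      have := hsin t' ⟨ht'.1, le_trans ht'.2 ht.2⟩
      rw [heq] at this; linarith
  have hβmem : β ∈ Icc α β := ⟨hαβ, le_rfl⟩
  obtain ⟨hlow, hhigh⟩ := key β hβmem
  obtain ⟨m, hm⟩ := (Real.cos_eq_one_iff _).mp h2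
  have hmn : m = n := by
    have g1 : (n : ℝ) ≤ m := by nlinarith
    have g2 : (m : ℝ) < n + 1 := by nlinarith
    have g1' : n ≤ m := by exact_mod_cast g1
    have g2' : m < n + 1 := by exact_mod_cast g2
    omega
  have : ψ β = n * (2 * Real.pi) := by rw [← hm, hmn]
  rw [this, hψα]; ring

lemma exp_I_arg' {z : ℂ} (hz : ‖z‖ = 1) :
    Complex.exp (Complex.I * z.arg) = z := by
  have := Complex.norm_mul_exp_arg_mul_I z
  rw [hz] at this
  rw [mul_comm]
  simpa using this

lemma re_pos_of_abs_one {w : ℂ} (h1 : ‖w‖ = 1) (h2 : ‖w - 1‖ < 1) :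
    0 < w.re := by
  have e1 : w.re * w.re + w.im * w.im = 1 := by
    have h := Complex.sq_norm w
    rw [h1, Complex.normSq_apply] at h
    nlinarith
  have e2 : (w.re - 1) * (w.re - 1) + w.im * w.im < 1 := by
    have h2' : ‖w - 1‖ ^ 2 < 1 := by nlinarith [norm_nonneg (w - 1)]
    have h := Complex.sq_norm (w - 1)
    rw [Complex.normSq_apply] at h
    simp only [Complex.sub_re, Complex.sub_im, Complex.one_re, Complex.one_im, sub_zero] at h
    nlinarith
  nlinarith

lemma prod_telescope (f : ℕ → ℂ) (hf : ∀ i, f i ≠ 0) (n : ℕ) :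
    ∏ i ∈ Finset.range n, (f (i + 1) / f i) = f n / f 0 := by
  induction n with
  | zero => simp [div_self (hf 0)]
  | succ n ih =>
      rw [Finset.prod_range_succ, ih, div_mul_div_comm]
      rw [div_eq_div_iff (by exact mul_ne_zero (hf 0) (hf n)) (hf 0)]
      ring

/-- Continuous lifting of a circle-valued map on a square, by grid subdivision. -/
lemma lift2 {F : ℝ × ℝ → ℂ} (hF : Continuous F) (habs : ∀ p, ‖F p‖ = 1)
    {u v : ℝ} (huv : u < v) :
    ∃ θ : ℝ × ℝ → ℝ, ContinuousOn θ (Icc u v ×ˢ Icc u v) ∧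
      ∀ p ∈ Icc u v ×ˢ Icc u v, Complex.exp (Complex.I * θ p) = F p := by
  have hFne : ∀ p, F p ≠ 0 := by
    intro p h
    have := habs p
    rw [h] at this; simp at this
  set K : Set (ℝ × ℝ) := Icc u v ×ˢ Icc u v with hK
  have hKcomp : IsCompact K := (isCompact_Icc).prod isCompact_Icc
  have hUC := hKcomp.uniformContinuousOn_of_continuous hF.continuousOn
  rw [Metric.uniformContinuousOn_iff] at hUC
  obtain ⟨δ, hδ, hδ'⟩ := hUC 1 one_pos
  obtain ⟨n, hnδ⟩ := exists_nat_gt ((v - u) / δ)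
  have hn0 : 0 < (n : ℝ) := lt_of_le_of_lt (div_nonneg (by linarith) hδ.le) hnδ
  have hn0' : (n : ℕ) ≠ 0 := by exact_mod_cast hn0.ne'
  set ms : ℝ := (v - u) / n with hms
  have hms0 : 0 < ms := div_pos (by linarith) hn0
  have hmsδ : ms < δ := by
    rw [hms, div_lt_iff₀ hn0]
    rw [div_lt_iff₀ hδ] at hnδ
    linarith [hnδ]
  set g : ℕ → ℝ := fun i => u + i * ms with hg
  set ρ : ℕ → ℝ → ℝ := fun i x => min x (g i) with hρ
  have hg0 : g 0 = u := by simp [hg]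
  have hgn : g n = v := by
    simp only [hg, hms]
    field_simp
    ring
  have hgmono : ∀ i, g i ≤ g (i + 1) := by
    intro i; simp only [hg]; push_cast; nlinarith
  have hgu : ∀ i, u ≤ g i := by
    intro i; simp only [hg]
    have : 0 ≤ (i : ℝ) * ms := mul_nonneg (Nat.cast_nonneg i) hms0.le
    linarith
  -- grid point properties
  have hρmem : ∀ (i : ℕ) {x}, x ∈ Icc u v → ρ i x ∈ Icc u v := by
    intro i x hx
    exact ⟨le_min hx.1 (hgu i), le_trans (min_le_left _ _) hx.2⟩
  have hρdist : ∀ (i : ℕ) (x : ℝ), ρ i x ≤ ρ (i + 1) x ∧ ρ (i + 1) x - ρ i x ≤ ms := by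
    intro i x
    constructor
    · exact min_le_min le_rfl (hgmono i)
    · have h1 : ρ (i+1) x ≤ ρ i x + ms := by
        simp only [hρ]
        rcases le_total x (g i) with h | h
        · rw [min_eq_left h]
          exact le_trans (min_le_left _ _) (by linarith)
        · rw [min_eq_right h]
          have : g (i+1) = g i + ms := by simp [hg]; push_cast; ring
          rw [this]
          exact le_trans (min_le_right _ _) le_rfl
      linarith
  -- the ratio of F-values at two nearby points of K is in the right half plane
  have hratio : ∀ {p q : ℝ × ℝ}, p ∈ K → q ∈ K → dist p q < δ →
      ‖F p / F q‖ = 1 ∧ 0 < (F p / F q).re := by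
    intro p q hp hq hd
    have h1 : ‖F p / F q‖ = 1 := by
      rw [norm_div, habs, habs]; norm_num
    refine ⟨h1, re_pos_of_abs_one h1 ?_⟩
    have : F p / F q - 1 = (F p - F q) / F q := by
      rw [sub_div, div_self (hFne q)]
    rw [this, norm_div, habs]
    simpa [Complex.dist_eq] using hδ' p hp q hq hd
  -- the summand functions
  set A : ℝ → ℝ := fun x => ∑ i ∈ Finset.range n,
      Complex.arg (F (ρ (i+1) x, u) / F (ρ i x, u)) with hA
  set B : ℝ × ℝ → ℝ := fun p => ∑ i ∈ Finset.range n,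
      Complex.arg (F (p.1, ρ (i+1) p.2) / F (p.1, ρ i p.2)) with hB
  set θ : ℝ × ℝ → ℝ := fun p => Complex.arg (F (u, u)) + A p.1 + B p with hθ
  have humem : u ∈ Icc u v := ⟨le_rfl, huv.le⟩
  -- closeness of horizontal grid pairs
  have hApair : ∀ (i : ℕ) {x : ℝ}, x ∈ Icc u v →
      ((ρ (i+1) x, u) : ℝ × ℝ) ∈ K ∧ ((ρ i x, u) : ℝ × ℝ) ∈ K ∧
      dist ((ρ (i+1) x, u) : ℝ × ℝ) ((ρ i x, u) : ℝ × ℝ) < δ := by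
    intro i x hx
    refine ⟨⟨hρmem (i+1) hx, humem⟩, ⟨hρmem i hx, humem⟩, ?_⟩
    rw [Prod.dist_eq]
    simp only [dist_self]
    rw [max_eq_left dist_nonneg]
    rw [Real.dist_eq, _root_.abs_of_nonneg (by linarith [(hρdist i x).1])]
    linarith [(hρdist i x).2]
  have hBpair : ∀ (i : ℕ) {x y : ℝ}, x ∈ Icc u v → y ∈ Icc u v →
      ((x, ρ (i+1) y) : ℝ × ℝ) ∈ K ∧ ((x, ρ i y) : ℝ × ℝ) ∈ K ∧
      dist ((x, ρ (i+1) y) : ℝ × ℝ) ((x, ρ i y) : ℝ × ℝ) < δ := by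
    intro i x y hx hy
    refine ⟨⟨hx, hρmem (i+1) hy⟩, ⟨hx, hρmem i hy⟩, ?_⟩
    rw [Prod.dist_eq]
    simp only [dist_self]
    rw [max_eq_right dist_nonneg]
    rw [Real.dist_eq, _root_.abs_of_nonneg (by linarith [(hρdist i y).1])]
    linarith [(hρdist i y).2]
  -- continuity
  have hρcont : ∀ i : ℕ, Continuous (ρ i) := by
    intro i; exact continuous_id.min continuous_const
  have hAcont1 : ContinuousOn A (Icc u v) := by
    rw [hA]
    apply continuousOn_finset_sum
    intro i _
    intro x hx
    have hinner : Continuous (fun x : ℝ => F (ρ (i+1) x, u) / F (ρ i x, u)) := by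
      apply Continuous.div
      · exact hF.comp (((hρcont (i+1))).prodMk continuous_const)
      · exact hF.comp (((hρcont i)).prodMk continuous_const)
      · intro y; exact hFne _
    obtain ⟨hp1, hp2, hd⟩ := hApair i hx
    have hre := (hratio hp1 hp2 hd).2
    have harg : ContinuousAt Complex.arg (F (ρ (i+1) x, u) / F (ρ i x, u)) :=
      Complex.continuousAt_arg (Complex.mem_slitPlane_iff.mpr (Or.inl hre))
    have hcw : ContinuousWithinAt (Complex.arg ∘ (fun x : ℝ => F (ρ (i+1) x, u) / F (ρ i x, u))) (Icc u v) x :=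
      ContinuousAt.comp_continuousWithinAt (f := fun x : ℝ => F (ρ (i+1) x, u) / F (ρ i x, u))
        (x := x) harg hinner.continuousAt.continuousWithinAt
    exact hcw
  have hAcont : ContinuousOn (fun p : ℝ × ℝ => A p.1) K :=
    hAcont1.comp continuous_fst.continuousOn (fun p hp => hp.1)
  have hBcont : ContinuousOn B K := by
    rw [hB]
    apply continuousOn_finset_sum
    intro i _
    intro p hp
    have hinner : Continuous (fun p : ℝ × ℝ => F (p.1, ρ (i+1) p.2) / F (p.1, ρ i p.2)) := by
      apply Continuous.div
      · exact hF.comp (continuous_fst.prodMk ((hρcont (i+1)).comp continuous_snd))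
      · exact hF.comp (continuous_fst.prodMk ((hρcont i).comp continuous_snd))
      · intro y; exact hFne _
    obtain ⟨hp1, hp2, hd⟩ := hBpair i hp.1 hp.2
    have hre := (hratio hp1 hp2 hd).2
    have harg : ContinuousAt Complex.arg (F (p.1, ρ (i+1) p.2) / F (p.1, ρ i p.2)) :=
      Complex.continuousAt_arg (Complex.mem_slitPlane_iff.mpr (Or.inl hre))
    have hcw : ContinuousWithinAt (Complex.arg ∘ (fun p : ℝ × ℝ => F (p.1, ρ (i+1) p.2) / F (p.1, ρ i p.2))) K p :=
      ContinuousAt.comp_continuousWithinAt (f := fun p : ℝ × ℝ => F (p.1, ρ (i+1) p.2) / F (p.1, ρ i p.2))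
        (x := p) harg hinner.continuousAt.continuousWithinAt
    exact hcw
  refine ⟨θ, ?_, ?_⟩
  · rw [hθ]
    exact (continuousOn_const.add hAcont).add hBcont
  · rintro ⟨x, y⟩ hp
    have hx : x ∈ Icc u v := hp.1
    have hy : y ∈ Icc u v := hp.2
    -- exp of the sums
    have hexpand : Complex.exp (Complex.I * θ (x, y)) =
        Complex.exp (Complex.I * Complex.arg (F (u,u))) *
        (∏ i ∈ Finset.range n, Complex.exp (Complex.I * Complex.arg (F (ρ (i+1) x, u) / F (ρ i x, u)))) *
        (∏ i ∈ Finset.range n, Complex.exp (Complex.I * Complex.arg (F (x, ρ (i+1) y) / F (x, ρ i y)))) := by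
      rw [hθ]
      simp only [hA, hB]
      push_cast
      rw [mul_add, mul_add, Complex.exp_add, Complex.exp_add]
      congr 1
      · congr 1
        rw [Finset.mul_sum, Complex.exp_sum]
      · rw [Finset.mul_sum, Complex.exp_sum]
    rw [hexpand]
    have hexp0 : Complex.exp (Complex.I * Complex.arg (F (u,u))) = F (u, u) :=
      exp_I_arg' (habs _)
    have hexpA : ∀ i ∈ Finset.range n,
        Complex.exp (Complex.I * Complex.arg (F (ρ (i+1) x, u) / F (ρ i x, u)))
          = F (ρ (i+1) x, u) / F (ρ i x, u) := by
      intro i _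
      obtain ⟨hp1, hp2, hd⟩ := hApair i hx
      exact exp_I_arg' (hratio hp1 hp2 hd).1
    have hexpB : ∀ i ∈ Finset.range n,
        Complex.exp (Complex.I * Complex.arg (F (x, ρ (i+1) y) / F (x, ρ i y)))
          = F (x, ρ (i+1) y) / F (x, ρ i y) := by
      intro i _
      obtain ⟨hp1, hp2, hd⟩ := hBpair i hx hy
      exact exp_I_arg' (hratio hp1 hp2 hd).1
    rw [Finset.prod_congr rfl hexpA, Finset.prod_congr rfl hexpB, hexp0]
    have hρ0x : ρ 0 x = u := by simp [hρ, hg0, min_eq_right hx.1]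
    have hρnx : ρ n x = x := by simp [hρ, hgn, min_eq_left hx.2]
    have hρ0y : ρ 0 y = u := by simp [hρ, hg0, min_eq_right hy.1]
    have hρny : ρ n y = y := by simp [hρ, hgn, min_eq_left hy.2]
    rw [prod_telescope (fun i => F (ρ i x, u)) (fun i => hFne _) n]
    rw [prod_telescope (fun i => F (x, ρ i y)) (fun i => hFne _) n]
    rw [hρ0x, hρnx, hρ0y, hρny]
    have hne1 : F (u,u) ≠ 0 := hFne _
    have hne2 : F (x,u) ≠ 0 := hFne _
    field_simp

/-- The heart of the Umlaufsatz, for a curve based at a lowest point. -/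
lemma core (c L : ℝ) (hL : 0 < L) (f f' : ℝ → ℂ)
    (hf'c : Continuous f')
    (hFTC : ∀ s t : ℝ, c - L ≤ s → s ≤ t → t ≤ c + L → (∫ u in s..t, f' u) = f t - f s)
    (hne : ∀ t, f' t ≠ 0)
    (hper : f' (c + L) = f' c)
    (hfper : ∀ t, c - L ≤ t → t ≤ c → f (t + L) = f t)
    (hclosed : f (c + L) = f c)
    (hmin : ∀ t, c - L ≤ t → t ≤ c + L → (f c).im ≤ (f t).im)
    (hIm : (f' c).im = 0)
    (hsec : ∀ s t, c - L ≤ s → s < t → t ≤ c + L → t - s < L → f t ≠ f s) :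
    ∃ ψ : ℝ → ℝ, ContinuousOn ψ (Icc c (c + L)) ∧
      (∀ t ∈ Icc c (c + L), Complex.exp (Complex.I * ψ t) = nz (f' t)) ∧
      (ψ (c + L) - ψ c = 2 * Real.pi ∨ ψ (c + L) - ψ c = -(2 * Real.pi)) := by
  set d := c + L with hd
  have hcd : c < d := by rw [hd]; linarith
  -- the secant/tangent direction numerator
  set P : ℝ × ℝ → ℂ := fun p => ∫ u in (0:ℝ)..1, f' (p.1 + u * (p.2 - p.1)) with hP
  have hPcont : Continuous P := by
    rw [hP]
    apply intervalIntegral.continuous_parametric_intervalIntegral_of_continuous' (μ := MeasureTheory.volume)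
    apply hf'c.comp
    fun_prop
  have hPdiag : ∀ s : ℝ, P (s, s) = f' s := by
    intro s
    have e : (fun u : ℝ => f' (s + u * (s - s))) = fun _ : ℝ => f' s := by
      funext u; simp
    simp only [hP, e]
    rw [intervalIntegral.integral_const]
    simp
  have hPmul : ∀ s t : ℝ, c - L ≤ s → s ≤ t → t ≤ d →
      ((t - s : ℝ) : ℂ) * P (s, t) = f t - f s := by
    intro s t h1 h2 h3
    rcases eq_or_lt_of_le h2 with rfl | hlt
    · simp
    · have hts : t - s ≠ 0 := ne_of_gt (by linarith)
      have e1 : P (s, t) = ((t - s)⁻¹ : ℝ) • ∫ u in s..t, f' u := by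
        simp only [hP]
        rw [show (fun u : ℝ => f' (s + u * (t - s))) = fun u => f' ((t - s) * u + s) from
          funext fun u => by ring_nf]
        rw [intervalIntegral.integral_comp_mul_add f' hts s]
        norm_num
      rw [e1, hFTC s t h1 h2 h3, Complex.real_smul]
      have hts' : ((t:ℂ) - (s:ℂ)) ≠ 0 := by exact_mod_cast hts
      push_cast
      field_simp
  -- the triangle
  set T : Set (ℝ × ℝ) := (Icc c d ×ˢ Icc c d) ∩ {p : ℝ × ℝ | p.1 ≤ p.2} with hT
  have hTsub : T ⊆ Icc c d ×ˢ Icc c d := inter_subset_left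
  have hTmem : ∀ {p : ℝ × ℝ}, p ∈ T → c ≤ p.1 ∧ p.1 ≤ p.2 ∧ p.2 ≤ d := by
    intro p hp
    exact ⟨hp.1.1.1, hp.2, hp.1.2.2⟩
  have hP1ne : ∀ p ∈ T, p.2 - p.1 < L → P p ≠ 0 := by
    intro p hp hhalf h0
    obtain ⟨h1, h2, h3⟩ := hTmem hp
    rcases eq_or_lt_of_le h2 with heq | hlt
    · rw [show p = (p.1, p.2) from rfl, ← heq, hPdiag] at h0
      exact hne p.1 h0
    · have := hPmul p.1 p.2 (by linarith) h2 h3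
      rw [show p = (p.1, p.2) from rfl] at h0
      rw [h0, mul_zero] at this
      exact hsec p.1 p.2 (by linarith) hlt h3 hhalf (sub_eq_zero.mp this.symm)
  have hP2ne : ∀ p ∈ T, L/2 ≤ p.2 - p.1 → P (p.2 - L, p.1) ≠ 0 := by
    intro p hp hhalf h0
    obtain ⟨h1, h2, h3⟩ := hTmem hp
    have hs't' : p.2 - L ≤ p.1 := by
      have : p.2 ≤ d := h3
      rw [hd] at this; linarith
    rcases eq_or_lt_of_le hs't' with heq | hlt
    · rw [heq, hPdiag] at h0
      exact hne p.1 h0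
    · have hm := hPmul (p.2 - L) p.1 (by linarith) hlt.le (by linarith)
      rw [h0, mul_zero] at hm
      have hfp : f (p.2 - L) = f p.2 := by
        have := hfper (p.2 - L) (by linarith) (by rw [hd] at h3; linarith)
        rw [show p.2 - L + L = p.2 by ring] at this
        exact this.symm
      rw [hfp] at hm
      have hp12 : p.1 < p.2 := by linarith
      exact hsec p.1 p.2 (by linarith) hp12 h3 (by linarith) (sub_eq_zero.mp hm.symm).symm
  -- the secant direction map
  set h : ℝ × ℝ → ℂ := fun p =>
    if p.2 - p.1 < L/2 then nz (P p) else -nz (P (p.2 - L, p.1)) with hh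
  have habs1 : ∀ p ∈ T, ‖h p‖ = 1 := by
    intro p hp
    simp only [hh]
    split_ifs with hc
    · exact abs_nz (hP1ne p hp (by linarith))
    · push_neg at hc
      rw [norm_neg]
      exact abs_nz (hP2ne p hp hc)
  have hhcont : ContinuousOn h T := by
    rw [hh]
    apply ContinuousOn.if
    · intro p hp
      have hfr : p.2 - p.1 = L/2 := by
        have := frontier_lt_subset_eq (by fun_prop : Continuous fun p : ℝ × ℝ => p.2 - p.1)
          (continuous_const : Continuous fun _ : ℝ × ℝ => L/2) hp.2
        exact this
      obtain ⟨h1, h2, h3⟩ := hTmem hp.1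
      have e1 := hPmul p.1 p.2 (by linarith) h2 h3
      have hs't' : p.2 - L ≤ p.1 := by rw [hd] at h3; linarith
      have e2 := hPmul (p.2 - L) p.1 (by linarith) hs't' (by linarith)
      have hfp : f (p.2 - L) = f p.2 := by
        have := hfper (p.2 - L) (by linarith) (by rw [hd] at h3; linarith)
        rw [show p.2 - L + L = p.2 by ring] at this
        exact this.symm
      rw [hfp] at e2
      have hL2 : (0:ℝ) < L/2 := by linarith
      have q1 : nz (P p) = nz (f p.2 - f p.1) := by
        rw [← e1, show p.2 - p.1 = L/2 from hfr, nz_pos_mul hL2]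
      have q2 : nz (P (p.2 - L, p.1)) = nz (f p.1 - f p.2) := by
        rw [← e2, show p.1 - (p.2 - L) = L/2 by linarith, nz_pos_mul hL2]
      rw [q1, q2, show f p.1 - f p.2 = -(f p.2 - f p.1) by ring, nz_neg, neg_neg]
    · apply ContinuousOn.mono (s := T ∩ {p : ℝ × ℝ | p.2 - p.1 ≤ L/2})
      · intro p hp
        have hne' : P p ≠ 0 := hP1ne p hp.1 (by have := hp.2; simp at this; linarith)
        exact (continuousAt_nz hne').comp_continuousWithinAt
          hPcont.continuousAt.continuousWithinAt
      · intro p hp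
        exact ⟨hp.1, closure_lt_subset_le (by fun_prop) continuous_const hp.2⟩
    · apply ContinuousOn.mono (s := T ∩ {p : ℝ × ℝ | L/2 ≤ p.2 - p.1})
      · intro p hp
        have hne' : P (p.2 - L, p.1) ≠ 0 := hP2ne p hp.1 hp.2
        have hswap : Continuous (fun p : ℝ × ℝ => ((p.2 - L, p.1) : ℝ × ℝ)) := by fun_prop
        have hca : ContinuousAt (fun q : ℝ × ℝ => nz (P (q.2 - L, q.1))) p :=
          ContinuousAt.comp (g := nz) (f := fun q : ℝ × ℝ => P (q.2 - L, q.1)) (x := p)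
            (continuousAt_nz hne') ((hPcont.comp hswap).continuousAt)
        exact hca.continuousWithinAt.neg
      · intro p hp
        refine ⟨hp.1, ?_⟩
        have hcl : IsClosed {p : ℝ × ℝ | L/2 ≤ p.2 - p.1} :=
          isClosed_le continuous_const (by fun_prop)
        have : closure {a : ℝ × ℝ | ¬a.2 - a.1 < L / 2} ⊆ {p : ℝ × ℝ | L/2 ≤ p.2 - p.1} := by
          rw [show {a : ℝ × ℝ | ¬a.2 - a.1 < L / 2} = {p : ℝ × ℝ | L/2 ≤ p.2 - p.1} by
            ext q; simp [not_lt]]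
          exact hcl.closure_subset
        exact this hp.2
  -- clamp onto the triangle
  set cl : ℝ → ℝ := fun x => max c (min x d) with hcl
  have hclcont : Continuous cl := by fun_prop
  have hclmem : ∀ x, cl x ∈ Icc c d := by
    intro x
    constructor
    · exact le_max_left _ _
    · rw [hcl]
      simp only
      rw [max_le_iff]
      exact ⟨hcd.le, min_le_right _ _⟩
  have hclid : ∀ x ∈ Icc c d, cl x = x := by
    intro x hx
    rw [hcl]
    simp only
    rw [min_eq_left hx.2, max_eq_right hx.1]
  set clT : ℝ × ℝ → ℝ × ℝ := fun p => (cl p.1, max (cl p.1) (cl p.2)) with hclT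
  have hclTcont : Continuous clT := by
    rw [hclT]; fun_prop
  have hclTmem : ∀ p, clT p ∈ T := by
    intro p
    refine ⟨⟨hclmem p.1, ?_⟩, ?_⟩
    · constructor
      · exact le_trans (hclmem p.1).1 (le_max_left _ _)
      · exact max_le (hclmem p.1).2 (hclmem p.2).2
    · simp only [hclT, Set.mem_setOf_eq]
      exact le_max_left _ _
  have hclTid : ∀ p ∈ T, clT p = p := by
    intro p hp
    obtain ⟨h1, h2, h3⟩ := hTmem hp
    have e1 : cl p.1 = p.1 := hclid p.1 ⟨h1, le_trans h2 h3⟩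
    have e2 : cl p.2 = p.2 := hclid p.2 ⟨le_trans h1 h2, h3⟩
    rw [hclT]
    simp only
    rw [e1, e2, max_eq_right h2]
  set F : ℝ × ℝ → ℂ := fun p => h (clT p) with hF
  have hFcont : Continuous F := by
    rw [hF]
    exact hhcont.comp_continuous hclTcont hclTmem
  have hFabs : ∀ p, ‖F p‖ = 1 := fun p => habs1 _ (hclTmem p)
  obtain ⟨θ, hθcont, hθexp⟩ := lift2 hFcont hFabs hcd
  have hθT : ∀ p ∈ T, Complex.exp (Complex.I * θ p) = h p := by
    intro p hp
    rw [hθexp p (hTsub hp), hF]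
    simp only
    rw [hclTid p hp]
  -- corner values
  have hL2 : (0:ℝ) < L/2 := by linarith
  have hcc : h (c, c) = nz (f' c) := by
    simp only [hh]
    rw [if_pos (by simp; linarith)]
    rw [show ((c,c) : ℝ × ℝ) = (c, c) from rfl, hPdiag]
  have hdd : h (d, d) = nz (f' c) := by
    simp only [hh]
    rw [if_pos (by simp; linarith)]
    rw [hPdiag, hd, hper]
  have hcdv : h (c, d) = -nz (f' c) := by
    simp only [hh]
    rw [if_neg (by simp; rw [hd]; linarith)]
    rw [show ((c,d).2 - L : ℝ) = c by simp [hd], hPdiag]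
  -- membership helpers
  have hmemT : ∀ x y : ℝ, c ≤ x → x ≤ y → y ≤ d → ((x,y) : ℝ × ℝ) ∈ T := by
    intro x y h1 h2 h3
    refine ⟨⟨⟨h1, le_trans h2 h3⟩, ⟨le_trans h1 h2, h3⟩⟩, ?_⟩
    simp only [Set.mem_setOf_eq]
    exact h2
  -- sign of the imaginary part along the two edges
  have hIm1 : ∀ t ∈ Icc c d, 0 ≤ (h (c, t)).im := by
    intro t ht
    simp only [hh]
    split_ifs with hcase
    · rcases eq_or_lt_of_le ht.1 with heq | hlt
      · rw [← heq, hPdiag, nz_im, hIm]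
        simp
      · have e1 := hPmul c t (by linarith) ht.1 ht.2
        have q : nz (P (c, t)) = nz (f t - f c) := by
          rw [← e1, nz_pos_mul (by linarith : (0:ℝ) < t - c)]
        rw [q, nz_im]
        apply div_nonneg _ (norm_nonneg _)
        rw [Complex.sub_im]
        have := hmin t (by linarith) ht.2
        linarith
    · push_neg at hcase
      have hs't' : t - L ≤ c := by
        have := ht.2; rw [hd] at this; linarith
      rcases eq_or_lt_of_le hs't' with heq | hlt
      · rw [heq, hPdiag, Complex.neg_im, nz_im, hIm]
        simp
      · have e2 := hPmul (t - L) c (by linarith) hlt.le (by linarith)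
        have hfp : f (t - L) = f t := by
          have := hfper (t - L) (by linarith) (by linarith)
          rw [show t - L + L = t by ring] at this
          exact this.symm
        rw [hfp] at e2
        have q : nz (P (t - L, c)) = nz (f c - f t) := by
          rw [← e2, nz_pos_mul (by linarith : (0:ℝ) < c - (t - L))]
        rw [q, Complex.neg_im, nz_im]
        rw [neg_nonneg]
        apply div_nonpos_of_nonpos_of_nonneg _ (norm_nonneg _)
        rw [Complex.sub_im]
        have := hmin t (by linarith) ht.2
        linarith
  have hIm2 : ∀ s ∈ Icc c d, (h (s, d)).im ≤ 0 := by
    intro s hs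
    simp only [hh]
    split_ifs with hcase
    · rcases eq_or_lt_of_le hs.2 with heq | hlt
      · rw [heq, hPdiag, nz_im, hd, hper, hIm]
        simp
      · have e1 := hPmul s d (by linarith [hs.1]) hs.2 le_rfl
        have q : nz (P (s, d)) = nz (f c - f s) := by
          rw [← hclosed, ← e1, nz_pos_mul (by linarith : (0:ℝ) < d - s)]
        rw [q, nz_im]
        apply div_nonpos_of_nonpos_of_nonneg _ (norm_nonneg _)
        rw [Complex.sub_im]
        have := hmin s (by linarith [hs.1]) hs.2
        linarith
    · push_neg at hcase
      have hdL : d - L = c := by rw [hd]; ring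
      rw [hdL]
      rcases eq_or_lt_of_le hs.1 with heq | hlt
      · rw [← heq, hPdiag, Complex.neg_im, nz_im, hIm]
        simp
      · have e2 := hPmul c s (by linarith) hlt.le (by linarith [hs.2])
        have q : nz (P (c, s)) = nz (f s - f c) := by
          rw [← e2, nz_pos_mul (by linarith : (0:ℝ) < s - c)]
        rw [q, Complex.neg_im, nz_im]
        rw [neg_nonpos]
        apply div_nonneg _ (norm_nonneg _)
        rw [Complex.sub_im]
        have := hmin s (by linarith) hs.2
        linarith
  -- the tangent direction at the lowest point is real, hence ±1
  have hfc_real : f' c = ((f' c).re : ℂ) := by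
    apply Complex.ext
    · simp
    · simp [hIm]
  have hre_ne : (f' c).re ≠ 0 := by
    intro h0
    apply hne c
    rw [hfc_real, h0]
    simp
  -- the three paths
  set ψ1 : ℝ → ℝ := fun t => θ (c, t) with hψ1
  set ψ2 : ℝ → ℝ := fun s => θ (s, d) with hψ2
  set ψd : ℝ → ℝ := fun t => θ (t, t) with hψd
  have hmaps1 : ∀ t ∈ Icc c d, ((c, t) : ℝ × ℝ) ∈ T := by
    intro t ht; exact hmemT c t le_rfl ht.1 ht.2
  have hmaps2 : ∀ s ∈ Icc c d, ((s, d) : ℝ × ℝ) ∈ T := by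
    intro s hs; exact hmemT s d hs.1 hs.2 le_rfl
  have hmapsd : ∀ t ∈ Icc c d, ((t, t) : ℝ × ℝ) ∈ T := by
    intro t ht; exact hmemT t t ht.1 le_rfl ht.2
  have hψ1cont : ContinuousOn ψ1 (Icc c d) := by
    rw [hψ1]
    apply hθcont.comp (by fun_prop : Continuous fun t : ℝ => ((c, t) : ℝ × ℝ)).continuousOn
    intro t ht
    exact hTsub (hmaps1 t ht)
  have hψ2cont : ContinuousOn ψ2 (Icc c d) := by
    rw [hψ2]
    apply hθcont.comp (by fun_prop : Continuous fun s : ℝ => ((s, d) : ℝ × ℝ)).continuousOn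
    intro s hs
    exact hTsub (hmaps2 s hs)
  have hψdcont : ContinuousOn ψd (Icc c d) := by
    rw [hψd]
    apply hθcont.comp (by fun_prop : Continuous fun t : ℝ => ((t, t) : ℝ × ℝ)).continuousOn
    intro t ht
    exact hTsub (hmapsd t ht)
  have hψ1exp : ∀ t ∈ Icc c d, Complex.exp (Complex.I * ψ1 t) = h (c, t) :=
    fun t ht => hθT _ (hmaps1 t ht)
  have hψ2exp : ∀ s ∈ Icc c d, Complex.exp (Complex.I * ψ2 s) = h (s, d) :=
    fun s hs => hθT _ (hmaps2 s hs)
  have hψdexp : ∀ t ∈ Icc c d, Complex.exp (Complex.I * ψd t) = nz (f' t) := by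
    intro t ht
    rw [show Complex.exp (Complex.I * ψd t) = h (t, t) from hθT _ (hmapsd t ht)]
    simp only [hh]
    rw [if_pos (by simp; linarith)]
    rw [hPdiag]
  -- trigonometric data for the edge functions
  have hsin1 : ∀ t ∈ Icc c d, 0 ≤ Real.sin (ψ1 t) := by
    intro t ht
    rw [← expI_im (ψ1 t), hψ1exp t ht]
    exact hIm1 t ht
  have hsin2 : ∀ s ∈ Icc c d, 0 ≤ Real.sin (- ψ2 s) := by
    intro s hs
    rw [Real.sin_neg, neg_nonneg, ← expI_im (ψ2 s), hψ2exp s hs]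
    exact hIm2 s hs
  have hccmem : c ∈ Icc c d := ⟨le_rfl, hcd.le⟩
  have hddmem : d ∈ Icc c d := ⟨hcd.le, le_rfl⟩
  have hcos1a : Real.cos (ψ1 c) = (nz (f' c)).re := by
    rw [← expI_re (ψ1 c), hψ1exp c hccmem, hcc]
  have hcos1b : Real.cos (ψ1 d) = -(nz (f' c)).re := by
    rw [← expI_re (ψ1 d), hψ1exp d hddmem, hcdv]
    simp
  have hcos2a : Real.cos (- ψ2 c) = -(nz (f' c)).re := by
    rw [Real.cos_neg, ← expI_re (ψ2 c), hψ2exp c hccmem, hcdv]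
    simp
  have hcos2b : Real.cos (- ψ2 d) = (nz (f' c)).re := by
    rw [Real.cos_neg, ← expI_re (ψ2 d), hψ2exp d hddmem, hdd]
  -- total variation along the diagonal via the two edges
  have hsplit : ψd d - ψd c = (ψ2 d - ψ2 c) + (ψ1 d - ψ1 c) := by
    simp only [hψd, hψ1, hψ2]
    ring
  refine ⟨ψd, hψdcont, hψdexp, ?_⟩
  rcases lt_or_gt_of_ne hre_ne with hneg | hpos
  · -- f' c points in the negative real direction : ε = -1
    have hnz : nz (f' c) = -1 := by
      rw [hfc_real]; exact nz_real_neg hneg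
    have hnzre : (nz (f' c)).re = -1 := by rw [hnz]; simp
    have e1 : ψ1 d - ψ1 c = -Real.pi := by
      apply edge_neg hcd.le hψ1cont hsin1
      · rw [hcos1a, hnzre]
      · rw [hcos1b, hnzre]; norm_num
    have e2 : (- ψ2 d) - (- ψ2 c) = Real.pi := by
      apply edge_pos hcd.le (hψ2cont.neg) hsin2
      · rw [Pi.neg_apply, hcos2a, hnzre]; norm_num
      · rw [Pi.neg_apply, hcos2b, hnzre]
    right
    rw [hsplit]
    have : ψ2 d - ψ2 c = -Real.pi := by linarith
    rw [this, e1]; ring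
  · -- f' c points in the positive real direction : ε = +1
    have hnz : nz (f' c) = 1 := by
      rw [hfc_real]; exact nz_real_pos hpos
    have hnzre : (nz (f' c)).re = 1 := by rw [hnz]; simp
    have e1 : ψ1 d - ψ1 c = Real.pi := by
      apply edge_pos hcd.le hψ1cont hsin1
      · rw [hcos1a, hnzre]
      · rw [hcos1b, hnzre]
    have e2 : (- ψ2 d) - (- ψ2 c) = -Real.pi := by
      apply edge_neg hcd.le (hψ2cont.neg) hsin2
      · rw [Pi.neg_apply, hcos2a, hnzre]
      · rw [Pi.neg_apply, hcos2b, hnzre]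
    left
    rw [hsplit]
    have : ψ2 d - ψ2 c = Real.pi := by linarith
    rw [this, e1]; ring

lemma deriv_nonneg_right {g : ℝ → ℝ} {m a b x : ℝ} (hx : a ≤ x) (hxb : x < b)
    (hder : HasDerivWithinAt g m (Icc a b) x)
    (hmin : ∀ y ∈ Icc a b, g x ≤ g y) : 0 ≤ m := by
  rw [hasDerivWithinAt_iff_tendsto_slope] at hder
  have hsub : Ioc x b ⊆ Icc a b \ {x} := by
    intro y hy
    exact ⟨⟨le_trans hx hy.1.le, hy.2⟩, ne_of_gt hy.1⟩
  have hten : Filter.Tendsto (slope g x) (𝓝[Ioc x b] x) (𝓝 m) :=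
    hder.mono_left (nhdsWithin_mono x hsub)
  haveI : (𝓝[Ioc x b] x).NeBot := by
    rw [nhdsWithin_Ioc_eq_nhdsGT hxb]
    infer_instance
  apply ge_of_tendsto hten
  apply Filter.eventually_of_mem self_mem_nhdsWithin
  intro y hy
  rw [slope_def_field]
  apply div_nonneg
  · have := hmin y ⟨le_trans hx hy.1.le, hy.2⟩; linarith
  · linarith [hy.1]

lemma deriv_nonpos_left {g : ℝ → ℝ} {m a b x : ℝ} (hx : a < x) (hxb : x ≤ b)
    (hder : HasDerivWithinAt g m (Icc a b) x)
    (hmin : ∀ y ∈ Icc a b, g x ≤ g y) : m ≤ 0 := by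
  rw [hasDerivWithinAt_iff_tendsto_slope] at hder
  have hsub : Ico a x ⊆ Icc a b \ {x} := by
    intro y hy
    exact ⟨⟨hy.1, le_trans hy.2.le hxb⟩, ne_of_lt hy.2⟩
  have hten : Filter.Tendsto (slope g x) (𝓝[Ico a x] x) (𝓝 m) :=
    hder.mono_left (nhdsWithin_mono x hsub)
  haveI : (𝓝[Ico a x] x).NeBot := by
    rw [nhdsWithin_Ico_eq_nhdsLT hx]
    infer_instance
  apply le_of_tendsto hten
  apply Filter.eventually_of_mem self_mem_nhdsWithin
  intro y hy
  rw [slope_def_field]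
  apply div_nonpos_of_nonneg_of_nonpos
  · have := hmin y ⟨hy.1, le_trans hy.2.le hxb⟩; linarith
  · linarith [hy.2]


end Umlauf

open Umlauf in
/-- **Hopf's Umlaufsatz.** If `σ : [a,b] → ℂ` is a `C¹` parametrization of a Jordan
curve with `σ'(a) = σ'(b)` and nonvanishing derivative, and `φ` is a continuous lift
of the argument of the tangent vector, then `φ(b) - φ(a) = ±2π`. -/
theorem umlaufsatz (a b : ℝ) (hab : a < b) (σ σ' : ℝ → ℂ) (φ : ℝ → ℝ)
    (hderiv : ∀ t ∈ Set.Icc a b, HasDerivWithinAt σ (σ' t) (Set.Icc a b) t)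
    (hC1 : ContinuousOn σ' (Set.Icc a b))
    (hclosed : σ a = σ b)
    (hinj : Set.InjOn σ (Set.Ico a b))
    (hper : σ' a = σ' b)
    (hne : ∀ t ∈ Set.Icc a b, 0 < ‖σ' t‖)
    (hφ : ContinuousOn φ (Set.Icc a b))
    (hlift : ∀ t ∈ Set.Icc a b,
      σ' t = (‖σ' t‖ : ℂ) * Complex.exp (Complex.I * (φ t : ℂ))) :
    φ b - φ a = 2 * Real.pi ∨ φ b - φ a = -(2 * Real.pi) := by
  set L : ℝ := b - a with hLdef
  have hL : 0 < L := by rw [hLdef]; linarith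
  have hbaL : b = a + L := by rw [hLdef]; ring
  -- clamped versions of σ and σ'
  set cl0 : ℝ → ℝ := fun x => max a (min x b) with hcl0
  have hcl0cont : Continuous cl0 := by fun_prop
  have hcl0mem : ∀ x, cl0 x ∈ Icc a b := by
    intro x
    exact ⟨le_max_left _ _, max_le hab.le (min_le_right _ _)⟩
  have hcl0id : ∀ x, a ≤ x → x ≤ b → cl0 x = x := by
    intro x h1 h2
    rw [hcl0]
    simp only
    rw [min_eq_left h2, max_eq_right h1]
  set σc : ℝ → ℂ := fun x => σ (cl0 x) with hσc
  set σ'c : ℝ → ℂ := fun x => σ' (cl0 x) with hσ'c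
  have hσ'ccont : Continuous σ'c := hC1.comp_continuous hcl0cont hcl0mem
  have hσceq : ∀ x, a ≤ x → x ≤ b → σc x = σ x := by
    intro x h1 h2; rw [hσc]; simp only; rw [hcl0id x h1 h2]
  have hσ'ceq : ∀ x, a ≤ x → x ≤ b → σ'c x = σ' x := by
    intro x h1 h2; rw [hσ'c]; simp only; rw [hcl0id x h1 h2]
  have hσ'cne : ∀ x, σ'c x ≠ 0 := by
    intro x h0
    have := hne (cl0 x) (hcl0mem x)
    rw [hσ'c] at h0
    simp only at h0
    rw [h0] at this
    simp at this
  -- the periodic extensions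
  set f : ℝ → ℂ := fun t => if t ≤ a then σc (t + L) else if t ≤ b then σc t else σc (t - L)
    with hfdef
  set f' : ℝ → ℂ := fun t => if t ≤ a then σ'c (t + L) else if t ≤ b then σ'c t else σ'c (t - L)
    with hf'def
  have hf'cont : Continuous f' := by
    rw [hf'def]
    have hinner : Continuous (fun t : ℝ => if t ≤ b then σ'c t else σ'c (t - L)) := by
      apply Continuous.if_le (hσ'ccont) (hσ'ccont.comp (by fun_prop)) continuous_id
        continuous_const
      intro x hx
      simp only [Function.comp]
      simp only [id_eq] at hx
      rw [hx, show b - L = a by rw [hbaL]; ring, hσ'ceq b hab.le le_rfl,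
        hσ'ceq a le_rfl hab.le, hper]
    apply Continuous.if_le (hσ'ccont.comp (by fun_prop)) hinner continuous_id continuous_const
    intro x hx
    simp only [Function.comp]
    simp only [id_eq] at hx
    rw [hx, show a + L = b by rw [hbaL], if_pos hab.le,
      hσ'ceq b hab.le le_rfl, hσ'ceq a le_rfl hab.le, hper]
  -- evaluation of f on the three periods
  have fm : ∀ t, a - L ≤ t → t ≤ a → f t = σ (t + L) := by
    intro t h1 h2
    rw [hfdef]
    simp only
    rw [if_pos h2, hσceq (t + L) (by linarith) (by rw [hbaL]; linarith)]
  have f0 : ∀ t, a ≤ t → t ≤ b → f t = σ t := by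
    intro t h1 h2
    rw [hfdef]
    simp only
    rcases le_or_gt t a with h | h
    · have : t = a := le_antisymm h h1
      rw [if_pos h, this, show a + L = b by rw [hbaL],
        hσceq b hab.le le_rfl, ← hclosed]
    · rw [if_neg (not_le.mpr h), if_pos h2, hσceq t h1 h2]
  have fp : ∀ t, b ≤ t → t ≤ b + L → f t = σ (t - L) := by
    intro t h1 h2
    rw [hfdef]
    simp only
    rw [if_neg (not_le.mpr (by linarith : a < t))]
    rcases le_or_gt t b with h | h
    · have : t = b := le_antisymm h h1
      rw [if_pos h, this, hσceq b hab.le le_rfl,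
        show b - L = a by rw [hbaL]; ring, ← hclosed]
    · rw [if_neg (not_le.mpr h),
        hσceq (t - L) (by rw [hbaL] at h; linarith) (by linarith)]
  -- evaluation of f' on the three periods
  have f'm : ∀ t, t ≤ a → f' t = σ'c (t + L) := by
    intro t h2
    rw [hf'def]
    simp only
    rw [if_pos h2]
  have f'0 : ∀ t, a ≤ t → t ≤ b → f' t = σ' t := by
    intro t h1 h2
    rw [hf'def]
    simp only
    rcases le_or_gt t a with h | h
    · have : t = a := le_antisymm h h1
      rw [if_pos h, this, show a + L = b by rw [hbaL],
        hσ'ceq b hab.le le_rfl, hper]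
    · rw [if_neg (not_le.mpr h), if_pos h2, hσ'ceq t h1 h2]
  have f'p : ∀ t, b ≤ t → f' t = σ'c (t - L) := by
    intro t h1
    rw [hf'def]
    simp only
    rw [if_neg (not_le.mpr (by linarith : a < t))]
    rcases le_or_gt t b with h | h
    · have : t = b := le_antisymm h h1
      rw [if_pos h, this, hσ'ceq b hab.le le_rfl,
        show b - L = a by rw [hbaL]; ring, hσ'ceq a le_rfl hab.le, hper]
    · rw [if_neg (not_le.mpr h)]
  -- fundamental theorem of calculus for σ' on subintervals of [a,b]
  have hσcont : ContinuousOn σ (Icc a b) := fun t ht => (hderiv t ht).continuousWithinAt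
  have hFTCσ : ∀ s t : ℝ, a ≤ s → s ≤ t → t ≤ b → (∫ u in s..t, σ'c u) = σ t - σ s := by
    intro s t h1 h2 h3
    apply intervalIntegral.integral_eq_sub_of_hasDeriv_right_of_le h2
      (hσcont.mono (Icc_subset_Icc h1 h3))
    · intro x hx
      have hmem : x ∈ Icc a b := ⟨by linarith [hx.1], by linarith [hx.2]⟩
      have hD := (hderiv x hmem).hasDerivAt
        (Icc_mem_nhds (by linarith [hx.1]) (by linarith [hx.2]))
      rw [hσ'ceq x hmem.1 hmem.2]
      exact hD.hasDerivWithinAt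
    · exact hσ'ccont.intervalIntegrable s t
  -- FTC for f' on each period
  have hIf' : ∀ s t : ℝ, IntervalIntegrable f' MeasureTheory.volume s t :=
    fun s t => hf'cont.intervalIntegrable s t
  have hFTC1 : ∀ s t : ℝ, a - L ≤ s → s ≤ t → t ≤ a → (∫ u in s..t, f' u) = f t - f s := by
    intro s t h1 h2 h3
    have hcongr : (∫ u in s..t, f' u) = ∫ u in s..t, σ'c (u + L) := by
      apply intervalIntegral.integral_congr
      intro u hu
      rw [uIcc_of_le h2] at hu
      exact f'm u (by linarith [hu.2])
    rw [hcongr, intervalIntegral.integral_comp_add_right, hFTCσ (s + L) (t + L)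
      (by linarith) (by linarith) (by rw [hbaL]; linarith),
      fm t (by linarith) h3, fm s h1 (by linarith)]
  have hFTC2 : ∀ s t : ℝ, a ≤ s → s ≤ t → t ≤ b → (∫ u in s..t, f' u) = f t - f s := by
    intro s t h1 h2 h3
    have hcongr : (∫ u in s..t, f' u) = ∫ u in s..t, σ'c u := by
      apply intervalIntegral.integral_congr
      intro u hu
      rw [uIcc_of_le h2] at hu
      rw [f'0 u (by linarith [hu.1]) (by linarith [hu.2]),
        hσ'ceq u (by linarith [hu.1]) (by linarith [hu.2])]
    rw [hcongr, hFTCσ s t h1 h2 h3, f0 t (by linarith) h3, f0 s h1 (by linarith)]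
  have hFTC3 : ∀ s t : ℝ, b ≤ s → s ≤ t → t ≤ b + L → (∫ u in s..t, f' u) = f t - f s := by
    intro s t h1 h2 h3
    have hcongr : (∫ u in s..t, f' u) = ∫ u in s..t, σ'c (u - L) := by
      apply intervalIntegral.integral_congr
      intro u hu
      rw [uIcc_of_le h2] at hu
      exact f'p u (by linarith [hu.1])
    rw [hcongr, intervalIntegral.integral_comp_sub_right, hFTCσ (s - L) (t - L)
      (by rw [hbaL] at h1; linarith) (by linarith) (by linarith),
      fp t (by linarith) h3, fp s h1 (by linarith)]
  have hFTCab : ∀ s t : ℝ, a - L ≤ s → s ≤ t → t ≤ b → (∫ u in s..t, f' u) = f t - f s := by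
    intro s t h1 h2 h3
    rcases le_total t a with h | h
    · exact hFTC1 s t h1 h2 h
    · rcases le_total a s with h' | h'
      · exact hFTC2 s t h' h2 h3
      · rw [← intervalIntegral.integral_add_adjacent_intervals (hIf' s a) (hIf' a t),
          hFTC1 s a h1 h' le_rfl, hFTC2 a t le_rfl h h3]
        ring
  have hFTCfull : ∀ s t : ℝ, a - L ≤ s → s ≤ t → t ≤ b + L →
      (∫ u in s..t, f' u) = f t - f s := by
    intro s t h1 h2 h3
    rcases le_total t b with h | h
    · exact hFTCab s t h1 h2 h
    · rcases le_total b s with h' | h'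
      · exact hFTC3 s t h' h2 h3
      · rw [← intervalIntegral.integral_add_adjacent_intervals (hIf' s b) (hIf' b t),
          hFTCab s b h1 h' le_rfl, hFTC3 b t le_rfl h h3]
        ring
  -- choose the base point : a lowest point of the curve
  obtain ⟨c₀, hc₀mem, hc₀min⟩ := isCompact_Icc.exists_isMinOn (nonempty_Icc.mpr hab.le)
    (Complex.continuous_im.comp_continuousOn hσcont)
  rw [isMinOn_iff] at hc₀min
  set c : ℝ := if c₀ = b then a else c₀ with hcdef
  have hcmem : c ∈ Ico a b := by
    rw [hcdef]
    split_ifs with h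
    · exact ⟨le_rfl, hab⟩
    · exact ⟨hc₀mem.1, lt_of_le_of_ne hc₀mem.2 h⟩
  have hcmin : ∀ t ∈ Icc a b, (σ c).im ≤ (σ t).im := by
    intro t ht
    rw [hcdef]
    split_ifs with h
    · rw [hclosed, ← h]
      exact hc₀min t ht
    · exact hc₀min t ht
  have hacb : a ≤ c := hcmem.1
  have hcb : c < b := hcmem.2
  -- verify the hypotheses of `core`
  have hcore := core c L hL f f' hf'cont
    (by -- hFTC
      intro s t h1 h2 h3
      exact hFTCfull s t (by linarith) h2 (by rw [hbaL] at hcb ⊢; linarith))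
    (by -- hne
      intro t
      rw [hf'def]
      simp only
      split_ifs <;> apply hσ'cne)
    (by -- hper
      rw [f'p (c + L) (by linarith), f'0 c hacb hcb.le,
        show c + L - L = c by ring, hσ'ceq c hacb hcb.le])
    (by -- hfper
      intro t h1 h2
      rcases le_total t a with h | h
      · rcases le_total (t + L) a with h' | h'
        · have ht : t + L = a := le_antisymm h' (by linarith)
          rw [ht, fm t (by linarith) h, ht, f0 a le_rfl hab.le]
        · rw [f0 (t + L) h' (by rw [hbaL]; linarith), fm t (by linarith) h]
      · rw [fp (t + L) (by rw [hbaL]; linarith [hcb]) (by linarith [hcb]),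
          show t + L - L = t by ring, f0 t h (by linarith [hcb])])
    (by -- hclosed
      rw [fp (c + L) (by linarith) (by linarith), show c + L - L = c by ring,
        f0 c hacb hcb.le])
    (by -- hmin
      intro t h1 h2
      rw [f0 c hacb hcb.le]
      rcases le_total t a with h | h
      · rw [fm t (by linarith) h]
        exact hcmin _ ⟨by linarith, by rw [hbaL]; linarith⟩
      · rcases le_total t b with h' | h'
        · rw [f0 t h h']
          exact hcmin _ ⟨h, h'⟩
        · rw [fp t h' (by rw [hbaL] at hcb ⊢; linarith)]
          exact hcmin _ ⟨by rw [hbaL] at h'; linarith, by linarith⟩)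
    (by -- hIm
      rw [f'0 c hacb hcb.le]
      rcases eq_or_lt_of_le hacb with heq | hlt
      · -- c = a : use both endpoints
        have h1 : 0 ≤ (σ' a).im := by
          apply deriv_nonneg_right le_rfl hab
            ((Complex.imCLM.hasFDerivAt.comp_hasDerivWithinAt a (hderiv a ⟨le_rfl, hab.le⟩)))
          intro y hy
          have := hcmin y hy
          rw [← heq] at this
          simpa using this
        have h2 : (σ' b).im ≤ 0 := by
          apply deriv_nonpos_left hab le_rfl
            ((Complex.imCLM.hasFDerivAt.comp_hasDerivWithinAt b (hderiv b ⟨hab.le, le_rfl⟩)))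
          intro y hy
          have := hcmin y hy
          rw [← heq] at this
          rw [hclosed] at this
          simpa using this
        rw [hper] at h1
        rw [← heq]
        rw [hper]
        linarith
      · have h1 : 0 ≤ (σ' c).im := by
          apply deriv_nonneg_right hacb hcb
            ((Complex.imCLM.hasFDerivAt.comp_hasDerivWithinAt c (hderiv c ⟨hacb, hcb.le⟩)))
          intro y hy
          simpa using hcmin y hy
        have h2 : (σ' c).im ≤ 0 := by
          apply deriv_nonpos_left hlt hcb.le
            ((Complex.imCLM.hasFDerivAt.comp_hasDerivWithinAt c (hderiv c ⟨hacb, hcb.le⟩)))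
          intro y hy
          simpa using hcmin y hy
        linarith)
    (by -- hsec
      intro s t h1 h2 h3 h4 heq
      have hmap : ∀ u, a - L ≤ u → u ≤ b + L →
          ∃ w, w ∈ Ico a b ∧ f u = σ w ∧ ∃ k : ℤ, u - w = k * L := by
        intro u hu1 hu2
        rcases le_total u a with h | h
        · rcases lt_or_eq_of_le (show u + L ≤ b by rw [hbaL]; linarith) with h' | h'
          · exact ⟨u + L, ⟨by linarith, h'⟩, fm u hu1 h, ⟨-1, by push_cast; ring⟩⟩
          · refine ⟨a, ⟨le_rfl, hab⟩, ?_, ⟨0, ?_⟩⟩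
            · rw [fm u hu1 h, h', ← hclosed]
            · have : u = a := by rw [hbaL] at h'; linarith
              rw [this]; push_cast; ring
        · rcases le_total u b with h' | h'
          · rcases lt_or_eq_of_le h' with h'' | h''
            · exact ⟨u, ⟨h, h''⟩, f0 u h h', ⟨0, by push_cast; ring⟩⟩
            · refine ⟨a, ⟨le_rfl, hab⟩, ?_, ⟨1, ?_⟩⟩
              · rw [f0 u h h', h'', ← hclosed]
              · rw [h'', hbaL]; push_cast; ring
          · rcases lt_or_eq_of_le (show u - L ≤ b by linarith) with h'' | h''
            · exact ⟨u - L, ⟨by rw [hbaL] at h'; linarith, h''⟩, fp u h' hu2,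
                ⟨1, by push_cast; ring⟩⟩
            · refine ⟨a, ⟨le_rfl, hab⟩, ?_, ⟨2, ?_⟩⟩
              · rw [fp u h' hu2, h'', ← hclosed]
              · have : u = b + L := by linarith
                rw [this, hbaL]; push_cast; ring
      obtain ⟨ws, hwsmem, hws, ks, hks⟩ := hmap s (by linarith) (by nlinarith [hcb, hbaL])
      obtain ⟨wt, hwtmem, hwt, kt, hkt⟩ := hmap t (by linarith) (by nlinarith [hcb, hbaL])
      rw [hws, hwt] at heq
      have hww : wt = ws := hinj hwtmem hwsmem heq
      have : t - s = ((kt - ks : ℤ) : ℝ) * L := by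
        push_cast
        rw [show t - s = (t - wt) - (s - ws) + (wt - ws) by ring, hkt, hks, hww]
        ring
      have h5 : (0:ℝ) < ((kt - ks : ℤ) : ℝ) * L := by rw [← this]; linarith
      have h6 : ((kt - ks : ℤ) : ℝ) * L < L := by rw [← this]; exact h4
      have h7 : (0:ℤ) < kt - ks := by
        by_contra hc
        push_neg at hc
        have : ((kt - ks : ℤ) : ℝ) ≤ 0 := by exact_mod_cast hc
        nlinarith
      have h8 : (1:ℝ) ≤ ((kt - ks : ℤ) : ℝ) := by exact_mod_cast h7
      nlinarith)
  obtain ⟨ψ, hψcont, hψexp, hψdiff⟩ := hcore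
  -- compare ψ with the lift φ on [c, b] and with its translate on [b, c + L]
  have habsne : ∀ t ∈ Icc a b, ((‖σ' t‖ : ℝ) : ℂ) ≠ 0 := by
    intro t ht
    exact_mod_cast (hne t ht).ne'
  have hexpφ : ∀ t ∈ Icc a b, Complex.exp (Complex.I * φ t) = nz (σ' t) := by
    intro t ht
    obtain ⟨r, hr0, hre⟩ : ∃ r : ℝ, 0 < r ∧ σ' t = (r:ℂ) * Complex.exp (Complex.I * (φ t : ℂ)) :=
      ⟨‖σ' t‖, hne t ht, hlift t ht⟩
    have habse : ‖Complex.exp (Complex.I * (φ t : ℂ))‖ = 1 := by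
      rw [Complex.norm_exp]
      simp
    have hrne : (r:ℂ) ≠ 0 := by exact_mod_cast hr0.ne'
    rw [hre, nz, norm_mul, habse, Complex.norm_real, Real.norm_eq_abs, _root_.abs_of_pos hr0, mul_one]
    field_simp
  have hbd : b ≤ c + L := by rw [hbaL]; linarith
  have hccL : c ≤ b := hcb.le
  -- first comparison, on [c, b]
  have hcmp1 := lift_sub_const hccL (hψcont.mono (Icc_subset_Icc le_rfl hbd))
    (hφ.mono (Icc_subset_Icc hacb le_rfl))
    (by
      intro t ht
      have ht' : t ∈ Icc a b := ⟨by linarith [ht.1], ht.2⟩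
      rw [hexpφ t ht', hψexp t ⟨ht.1, by linarith [ht.2]⟩, f'0 t ht'.1 ht'.2])
  -- second comparison, on [b, c + L]
  have hχ : ContinuousOn (fun t : ℝ => φ (t - L)) (Icc b (c + L)) := by
    apply hφ.comp (by fun_prop : Continuous fun t : ℝ => t - L).continuousOn
    intro t ht
    show t - L ∈ Icc a b
    have h1 := ht.1
    have h2 := ht.2
    rw [hbaL] at h1
    exact ⟨by linarith, by linarith [hcb]⟩
  have hcmp2 := lift_sub_const hbd (hψcont.mono (Icc_subset_Icc hccL le_rfl)) hχ
    (by
      intro t ht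
      have ht' : t - L ∈ Icc a b := ⟨by rw [hbaL] at ht; linarith [ht.1], by linarith [ht.2, hcb]⟩
      rw [hexpφ (t - L) ht', hψexp t ⟨by linarith [ht.1], ht.2⟩, f'p t ht.1,
        hσ'ceq (t - L) ht'.1 ht'.2])
  have e1 := hcmp1 c ⟨le_rfl, hccL⟩
  have e2pre := hcmp2 b ⟨le_rfl, hbd⟩
  have e2 : ψ b - φ (b - L) = ψ (c + L) - φ (c + L - L) := e2pre
  have e3 : c + L - L = c := by ring
  have e4 : b - L = a := by rw [hbaL]; ring
  rw [e3] at e2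
  rw [e4] at e2
  -- conclude
  have hfinal : ψ (c + L) - ψ c = φ b - φ a := by linarith [e1, e2]
  rcases hψdiff with h | h
  · left; linarith [hfinal, h]
  · right; linarith [hfinal, h]
end

section
/- Let θ : (a,b) → ℝ be continuous and satisfy: θ is strictly increasing on every interval where cos θ ≤ 0, and whenever θ(t) = ℓπ + π/2 for some integer ℓ then θ is strictly increasing in a neighborhood of t. Let e ∈ (a,b) and ℓ₁, ℓ₂ ∈ ℤ with ℓ₁π + π/2 ≤ θ(e) ≤ ℓ₂π + π/2. Then θ(t) > ℓ₁π + π/2 for all t ∈ (e,b), and θ(t) < ℓ₂π + π/2 for all t ∈ (a,e). -/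
open Set

private lemma lc_no_drop (a b L : ℝ) (θ : ℝ → ℝ)
    (hcont : ContinuousOn θ (Set.Ioo a b))
    (hloc : ∀ t ∈ Set.Ioo a b, (∃ ℓ : ℤ, θ t = ℓ * Real.pi + Real.pi / 2) →
      ∃ ε > (0:ℝ), StrictMonoOn θ (Set.Ioo (t - ε) (t + ε) ∩ Set.Ioo a b))
    (hL : ∃ ℓ : ℤ, L = ℓ * Real.pi + Real.pi / 2)
    (e : ℝ) (he : e ∈ Set.Ioo a b) (hLe : L ≤ θ e)
    (t : ℝ) (ht : t ∈ Set.Ioo e b) (hθt : θ t < L) : False := by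
  obtain ⟨hae, heb⟩ := he
  obtain ⟨het, htb⟩ := ht
  have hIccsub : Set.Icc e t ⊆ Set.Ioo a b := fun x hx =>
    ⟨lt_of_lt_of_le hae hx.1, lt_of_le_of_lt hx.2 htb⟩
  set S : Set ℝ := Set.Icc e t ∩ θ ⁻¹' (Set.Ici L) with hS
  have hSe : e ∈ S := ⟨⟨le_rfl, het.le⟩, hLe⟩
  have hSne : S.Nonempty := ⟨e, hSe⟩
  have hSbdd : BddAbove S := ⟨t, fun x hx => hx.1.2⟩
  have hScl : IsClosed S := by
    exact ContinuousOn.preimage_isClosed_of_isClosed (hcont.mono hIccsub)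
      isClosed_Icc isClosed_Ici
  set c := sSup S with hc
  have hcS : c ∈ S := hScl.csSup_mem hSne hSbdd
  have hec : e ≤ c := le_csSup hSbdd hSe
  have hct' : c ≤ t := hcS.1.2
  have hθc : L ≤ θ c := hcS.2
  have hct : c < t := lt_of_le_of_ne hct' (by intro h; rw [h] at hθc; exact absurd hθc (not_le.2 hθt))
  have hcab : c ∈ Set.Ioo a b := hIccsub ⟨hec, hct'⟩
  have hlt : ∀ x ∈ Set.Ioc c t, θ x < L := by
    intro x hx
    by_contra hge
    exact absurd (le_csSup hSbdd ⟨⟨hec.trans hx.1.le, hx.2⟩, not_lt.1 hge⟩) (not_le.2 hx.1)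
  -- right limit shows θ c ≤ L
  have hcw : ContinuousWithinAt θ (Set.Ioc c t) c :=
    (hcont c hcab).mono (fun x hx => hIccsub ⟨hec.trans hx.1.le, hx.2⟩)
  have hne : (nhdsWithin c (Set.Ioc c t)).NeBot := by
    rw [← mem_closure_iff_nhdsWithin_neBot, closure_Ioc hct.ne]
    exact ⟨le_rfl, hct.le⟩
  have hθcle : θ c ≤ L :=
    le_of_tendsto hcw (eventually_mem_nhdsWithin.mono fun x hx => (hlt x hx).le)
  have hθcL : θ c = L := le_antisymm hθcle hθc
  obtain ⟨ℓ, hLℓ⟩ := hL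
  obtain ⟨ε, hε, hm⟩ := hloc c hcab ⟨ℓ, hθcL.trans hLℓ⟩
  set x := c + min ε (t - c) / 2 with hx
  have hmin : 0 < min ε (t - c) := lt_min hε (by linarith)
  have hcx : c < x := by simp only [hx]; linarith
  have hxt : x ≤ t := by
    have : min ε (t - c) ≤ t - c := min_le_right _ _
    simp only [hx]; linarith
  have hxmem : x ∈ Set.Ioo (c - ε) (c + ε) ∩ Set.Ioo a b := by
    constructor
    · constructor
      · linarith
      · have : min ε (t - c) ≤ ε := min_le_left _ _
        simp only [hx]; linarith
    · exact hIccsub ⟨hec.trans hcx.le, hxt⟩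
  have hcmem : c ∈ Set.Ioo (c - ε) (c + ε) ∩ Set.Ioo a b :=
    ⟨⟨by linarith, by linarith⟩, hcab⟩
  have := hm hcmem hxmem hcx
  have := hlt x ⟨hcx, hxt⟩
  linarith [hθcL ▸ this]

private lemma lc_no_rise (a b L : ℝ) (θ : ℝ → ℝ)
    (hcont : ContinuousOn θ (Set.Ioo a b))
    (hloc : ∀ t ∈ Set.Ioo a b, (∃ ℓ : ℤ, θ t = ℓ * Real.pi + Real.pi / 2) →
      ∃ ε > (0:ℝ), StrictMonoOn θ (Set.Ioo (t - ε) (t + ε) ∩ Set.Ioo a b))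
    (hL : ∃ ℓ : ℤ, L = ℓ * Real.pi + Real.pi / 2)
    (e : ℝ) (he : e ∈ Set.Ioo a b) (hLe : θ e ≤ L)
    (t : ℝ) (ht : t ∈ Set.Ioo a e) (hθt : L < θ t) : False := by
  obtain ⟨hae, heb⟩ := he
  obtain ⟨hat, hte⟩ := ht
  have hIccsub : Set.Icc t e ⊆ Set.Ioo a b := fun x hx =>
    ⟨lt_of_lt_of_le hat hx.1, lt_of_le_of_lt hx.2 heb⟩
  set S : Set ℝ := Set.Icc t e ∩ θ ⁻¹' (Set.Iic L) with hS
  have hSe : e ∈ S := ⟨⟨hte.le, le_rfl⟩, hLe⟩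
  have hSne : S.Nonempty := ⟨e, hSe⟩
  have hSbdd : BddBelow S := ⟨t, fun x hx => hx.1.1⟩
  have hScl : IsClosed S := by
    exact ContinuousOn.preimage_isClosed_of_isClosed (hcont.mono hIccsub)
      isClosed_Icc isClosed_Iic
  set c := sInf S with hc
  have hcS : c ∈ S := hScl.csInf_mem hSne hSbdd
  have hce : c ≤ e := csInf_le hSbdd hSe
  have htc' : t ≤ c := hcS.1.1
  have hθc : θ c ≤ L := hcS.2
  have htc : t < c := lt_of_le_of_ne htc' (by intro h; rw [h] at hθt; exact absurd hθc (not_le.2 hθt))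
  have hcab : c ∈ Set.Ioo a b := hIccsub ⟨htc', hce⟩
  have hgt : ∀ x ∈ Set.Ico t c, L < θ x := by
    intro x hx
    by_contra hle
    exact absurd (csInf_le hSbdd ⟨⟨hx.1, hx.2.le.trans hce⟩, not_lt.1 hle⟩) (not_le.2 hx.2)
  have hcw : ContinuousWithinAt θ (Set.Ico t c) c :=
    (hcont c hcab).mono (fun x hx => hIccsub ⟨hx.1, hx.2.le.trans hce⟩)
  have hne : (nhdsWithin c (Set.Ico t c)).NeBot := by
    rw [← mem_closure_iff_nhdsWithin_neBot, closure_Ico htc.ne]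
    exact ⟨htc.le, le_rfl⟩
  have hθcge : L ≤ θ c :=
    ge_of_tendsto hcw (eventually_mem_nhdsWithin.mono fun x hx => (hgt x hx).le)
  have hθcL : θ c = L := le_antisymm hθc hθcge
  obtain ⟨ℓ, hLℓ⟩ := hL
  obtain ⟨ε, hε, hm⟩ := hloc c hcab ⟨ℓ, hθcL.trans hLℓ⟩
  set x := c - min ε (c - t) / 2 with hx
  have hmin : 0 < min ε (c - t) := lt_min hε (by linarith)
  have hxc : x < c := by simp only [hx]; linarith
  have htx : t ≤ x := by
    have : min ε (c - t) ≤ c - t := min_le_right _ _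
    simp only [hx]; linarith
  have hxmem : x ∈ Set.Ioo (c - ε) (c + ε) ∩ Set.Ioo a b := by
    constructor
    · constructor
      · have : min ε (c - t) ≤ ε := min_le_left _ _
        simp only [hx]; linarith
      · linarith
    · exact hIccsub ⟨htx, hxc.le.trans hce⟩
  have hcmem : c ∈ Set.Ioo (c - ε) (c + ε) ∩ Set.Ioo a b :=
    ⟨⟨by linarith, by linarith⟩, hcab⟩
  have := hm hxmem hcmem hxc
  have := hgt x ⟨htx, hxc⟩
  linarith [hθcL ▸ this]

/-- Abstraction of Lemma 4.4 (LISO): if a continuous function `θ` on `(a,b)` is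
strictly increasing on every subinterval where `cos θ ≤ 0`, and strictly increasing
near every point where `θ = ℓπ + π/2`, then once `θ` reaches the level
`ℓ₁π + π/2` at `e` from below (resp. `ℓ₂π + π/2` from above), it stays strictly
above (resp. below) that level forwards (resp. backwards) in time. -/
theorem level_crossing
    (a b : ℝ) (θ : ℝ → ℝ)
    (hcont : ContinuousOn θ (Set.Ioo a b))
    (hmono : ∀ s t : ℝ, a < s → s ≤ t → t < b →
      (∀ x ∈ Set.Icc s t, Real.cos (θ x) ≤ 0) → StrictMonoOn θ (Set.Icc s t))
    (hloc : ∀ t ∈ Set.Ioo a b, (∃ ℓ : ℤ, θ t = ℓ * Real.pi + Real.pi / 2) →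
      ∃ ε > (0:ℝ), StrictMonoOn θ (Set.Ioo (t - ε) (t + ε) ∩ Set.Ioo a b))
    (e : ℝ) (he : e ∈ Set.Ioo a b) (ℓ₁ ℓ₂ : ℤ)
    (h₁ : (ℓ₁ : ℝ) * Real.pi + Real.pi / 2 ≤ θ e)
    (h₂ : θ e ≤ (ℓ₂ : ℝ) * Real.pi + Real.pi / 2) :
    (∀ t ∈ Set.Ioo e b, (ℓ₁ : ℝ) * Real.pi + Real.pi / 2 < θ t) ∧
    (∀ t ∈ Set.Ioo a e, θ t < (ℓ₂ : ℝ) * Real.pi + Real.pi / 2) := by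
  obtain ⟨hae, heb⟩ := he
  constructor
  · intro t ht
    by_contra hle
    rcases lt_or_eq_of_le (not_lt.1 hle) with hlt | heq
    · exact lc_no_drop a b _ θ hcont hloc ⟨ℓ₁, rfl⟩ e ⟨hae, heb⟩ h₁ t ht hlt
    · -- θ t = ℓ₁π + π/2 : use local strict monotonicity at t to find t' < t with θ t' < level
      obtain ⟨het, htb⟩ := ht
      have htab : t ∈ Set.Ioo a b := ⟨hae.trans het, htb⟩
      obtain ⟨ε, hε, hm⟩ := hloc t htab ⟨ℓ₁, heq⟩
      set t' := t - min ε (t - e) / 2 with ht'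
      have hmin : 0 < min ε (t - e) := lt_min hε (by linarith)
      have ht't : t' < t := by simp only [ht']; linarith
      have het' : e < t' := by
        have : min ε (t - e) ≤ t - e := min_le_right _ _
        simp only [ht']; linarith
      have ht'ab : t' ∈ Set.Ioo a b := ⟨hae.trans het', ht't.trans htb⟩
      have ht'mem : t' ∈ Set.Ioo (t - ε) (t + ε) ∩ Set.Ioo a b := by
        refine ⟨⟨?_, by linarith⟩, ht'ab⟩
        have : min ε (t - e) ≤ ε := min_le_left _ _
        simp only [ht']; linarith
      have htmem : t ∈ Set.Ioo (t - ε) (t + ε) ∩ Set.Ioo a b :=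
        ⟨⟨by linarith, by linarith⟩, htab⟩
      have hlt' : θ t' < θ t := hm ht'mem htmem ht't
      exact lc_no_drop a b _ θ hcont hloc ⟨ℓ₁, rfl⟩ e ⟨hae, heb⟩ h₁ t'
        ⟨het', ht't.trans htb⟩ (by rw [heq] at hlt'; exact hlt')
  · intro t ht
    by_contra hge
    rcases lt_or_eq_of_le (not_lt.1 hge) with hlt | heq
    · exact lc_no_rise a b _ θ hcont hloc ⟨ℓ₂, rfl⟩ e ⟨hae, heb⟩ h₂ t ht hlt
    · obtain ⟨hat, hte⟩ := ht
      have htab : t ∈ Set.Ioo a b := ⟨hat, hte.trans heb⟩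
      obtain ⟨ε, hε, hm⟩ := hloc t htab ⟨ℓ₂, heq.symm⟩
      set t' := t + min ε (e - t) / 2 with ht'
      have hmin : 0 < min ε (e - t) := lt_min hε (by linarith)
      have htt' : t < t' := by simp only [ht']; linarith
      have ht'e : t' < e := by
        have : min ε (e - t) ≤ e - t := min_le_right _ _
        simp only [ht']; linarith
      have ht'ab : t' ∈ Set.Ioo a b := ⟨hat.trans htt', ht'e.trans heb⟩
      have ht'mem : t' ∈ Set.Ioo (t - ε) (t + ε) ∩ Set.Ioo a b := by
        refine ⟨⟨by linarith, ?_⟩, ht'ab⟩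
        have : min ε (e - t) ≤ ε := min_le_left _ _
        simp only [ht']; linarith
      have htmem : t ∈ Set.Ioo (t - ε) (t + ε) ∩ Set.Ioo a b :=
        ⟨⟨by linarith, by linarith⟩, htab⟩
      have hlt' : θ t < θ t' := hm htmem ht'mem htt'
      exact lc_no_rise a b _ θ hcont hloc ⟨ℓ₂, rfl⟩ e ⟨hae, heb⟩ h₂ t'
        ⟨hat.trans htt', ht'e⟩ (by rw [← heq] at hlt'; exact hlt')
end
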